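/- With notation as above (U a strong unitary dilation of the self-adjoint contraction T, P_n the projection onto K_n = span{U^l(K) : l ≥ n}), one has P_n P(k) = U^n(T^n(k)) for every k ∈ K. -/

import Mathlib

open scoped ComplexInnerProductSpace


/-- With `U` a strong unitary dilation of the self-adjoint contraction `T` and
`P_n` the orthogonal projection onto `K_n = closed span of {U^l(K) : l ≥ n}`, one has
`P_n P(k) = U^n(T^n(k))` for every `k ∈ K`. -/
theorem stmt11 {L : Type*} [NormedAddCommGroup L] [InnerProductSpace ℂ L] [CompleteSpace L]
    (K : Submodule ℂ L) [CompleteSpace K]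
    (T : K →L[ℂ] K) (hsa : IsSelfAdjoint T) (hcontr : ‖T‖ ≤ 1)
    (U : L ≃ₗᵢ[ℂ] L)
    (hdil : ∀ (k : ℕ) (x : K), K.orthogonalProjectionOnto ((U ^ k) (x : L)) = (T ^ k) x)
    (n : ℕ) (Kn : Submodule ℂ L)
    (hKn : Kn = (⨆ l ∈ Set.Ici n,
      Submodule.map ((U ^ l : L ≃ₗᵢ[ℂ] L) : L →ₗ[ℂ] L) K).topologicalClosure)
    [CompleteSpace Kn] :
    ∀ k : K, (Kn.orthogonalProjectionOnto (k : L) : L) = (U ^ n) (((T ^ n) k : K) : L) := by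
  intro k
  set S : Submodule ℂ L := ⨆ l ∈ Set.Ici n,
      Submodule.map ((U ^ l : L ≃ₗᵢ[ℂ] L) : L →ₗ[ℂ] L) K with hS
  set u : L := (U ^ n) (((T ^ n) k : K) : L) with hu
  have hmem : u ∈ Kn := by
    rw [hKn]
    apply Submodule.le_topologicalClosure
    have : u ∈ Submodule.map ((U ^ n : L ≃ₗᵢ[ℂ] L) : L →ₗ[ℂ] L) K :=
      ⟨((T ^ n) k : K), ((T ^ n) k).2, rfl⟩
    exact (le_iSup₂ (f := fun l _ => Submodule.map ((U ^ l : L ≃ₗᵢ[ℂ] L) : L →ₗ[ℂ] L) K)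
      n (Set.mem_Ici.2 le_rfl)) this
  have hSperp : (k : L) - u ∈ Sᗮ := by
    rw [hS, ← iSup_subtype'' (Set.Ici n)
      (fun l => Submodule.map ((U ^ l : L ≃ₗᵢ[ℂ] L) : L →ₗ[ℂ] L) K),
      ← Submodule.iInf_orthogonal]
    refine Submodule.mem_iInf _ |>.2 fun l => ?_
    obtain ⟨l, hl⟩ := l
    have hl' : n ≤ l := Set.mem_Ici.1 hl
    rw [Submodule.mem_orthogonal]
    rintro _ ⟨x, hx, rfl⟩
    show ⟪(U ^ l) x, (k : L) - u⟫ = 0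
    have hln : n + (l - n) = l := by omega
    have hln2 : l - n + n = l := by omega
    have hTsa : ∀ m : ℕ, IsSelfAdjoint (T ^ m) :=
      fun m => IsSelfAdjoint.pow (R := (K →L[ℂ] K)) hsa m
    have h1 : ⟪(U ^ l) x, (k : L)⟫ = ⟪(((T ^ l) ⟨x, hx⟩ : K) : L), (k : L)⟫ := by
      have := Submodule.inner_orthogonalProjectionOnto_eq_of_mem_right (K := K) k ((U ^ l) x)
      rw [← Submodule.coe_inner, ← this, hdil l ⟨x, hx⟩, Submodule.coe_inner]
    have hUl : (U ^ l) x = (U ^ n) ((U ^ (l - n)) x) := by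
      have h : U ^ l = U ^ n * U ^ (l - n) := by rw [← pow_add, hln]
      rw [h, LinearIsometryEquiv.coe_mul, Function.comp_apply]
    have h2 : ⟪(U ^ l) x, u⟫ = ⟪(((T ^ l) ⟨x, hx⟩ : K) : L), (k : L)⟫ := by
      rw [hUl, hu, LinearIsometryEquiv.inner_map_map]
      have := Submodule.inner_orthogonalProjectionOnto_eq_of_mem_right (K := K) ((T ^ n) k) ((U ^ (l - n)) x)
      rw [← Submodule.coe_inner, ← this, hdil (l - n) ⟨x, hx⟩]
      calc ⟪(T ^ (l - n)) ⟨x, hx⟩, (T ^ n) k⟫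
          = ⟪(⟨x, hx⟩ : K), (T ^ (l - n)) ((T ^ n) k)⟫ := (hTsa (l - n)).isSymmetric _ _
        _ = ⟪(⟨x, hx⟩ : K), (T ^ l) k⟫ := by
            rw [← ContinuousLinearMap.comp_apply, ← ContinuousLinearMap.mul_def,
              ← pow_add, hln2]
        _ = ⟪((T ^ l) ⟨x, hx⟩ : K), k⟫ := ((hTsa l).isSymmetric _ _).symm
    rw [inner_sub_right, h1, h2, sub_self]
  have hperp : (k : L) - u ∈ Knᗮ := by
    rw [hKn, ← Submodule.orthogonal_orthogonal_eq_closure]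
    exact Submodule.le_orthogonal_orthogonal _ hSperp
  exact by have := Submodule.eq_starProjection_of_mem_orthogonal hmem hperp; rwa [Submodule.starProjection_apply] at this
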